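/- Every non-Archimedean norm α on a finite-dimensional complex vector space V (with respect to the trivial absolute value on ℂ) is diagonalizable: there exists a basis e_1, ..., e_N of V and reals λ_1, ..., λ_N such that α(Σ v_i e_i) = max over indices i with v_i ≠ 0 of e^{−λ_i}. -/

import Mathlib

open Module Submodule

section aux

set_option linter.unusedSectionVars false
set_option maxHeartbeats 800000

universe u

variable {V : Type u} [AddCommGroup V] [Module ℂ V]

lemma ultra_sum_le (α : V → ℝ) (h0 : α 0 = 0)
    (hultra : ∀ v v', α (v + v') ≤ max (α v) (α v'))
    {ι : Type*} (t : Finset ι) (u : ι → V) (c : ℝ) (hc : 0 ≤ c)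
    (hb : ∀ i ∈ t, α (u i) ≤ c) : α (∑ i ∈ t, u i) ≤ c := by
  classical
  induction t using Finset.induction_on with
  | empty => simpa [h0] using hc
  | insert _ _ hx ih =>
    rename_i a s
    rw [Finset.sum_insert hx]
    exact le_trans (hultra _ _) (max_le (hb a (by simp)) (ih fun i hi => hb i (by simp [hi])))

/-- sublevel sets are submodules -/
def sublevel (α : V → ℝ) (hultra : ∀ v v', α (v + v') ≤ max (α v) (α v'))
    (hscal : ∀ (τ : ℂ), τ ≠ 0 → ∀ v, α (τ • v) = α v)
    (h0 : α 0 = 0) (r : ℝ) : Submodule ℂ V where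
  carrier := {v | α v ≤ max r 0}
  add_mem' := fun ha hb => le_trans (hultra _ _) (max_le ha hb)
  zero_mem' := by simp [h0]
  smul_mem' := by
    intro c x hx
    rcases eq_or_ne c 0 with rfl | hc
    · simpa [h0] using le_max_right r 0
    · simpa [hscal c hc] using hx

lemma mem_sublevel {α : V → ℝ} {hultra} {hscal} {h0} {r : ℝ} {v : V} :
    v ∈ sublevel α hultra hscal h0 r ↔ α v ≤ max r 0 := Iff.rfl

lemma sublevel_mono {α : V → ℝ} {hultra} {hscal} {h0} {r r' : ℝ} (h : r ≤ r') :
    sublevel α hultra hscal h0 r ≤ sublevel α hultra hscal h0 r' :=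
  fun _ hv => le_trans hv (max_le_max h le_rfl)

/-- The set of values of α is finite. -/
lemma values_finite [FiniteDimensional ℂ V] (α : V → ℝ) (hnn : ∀ v, 0 ≤ α v)
    (hultra : ∀ v v', α (v + v') ≤ max (α v) (α v'))
    (hscal : ∀ (τ : ℂ), τ ≠ 0 → ∀ v, α (τ • v) = α v)
    (h0 : α 0 = 0) : (Set.range α).Finite := by
  set δ : ℝ → ℕ := fun r => finrank ℂ (sublevel α hultra hscal h0 r) with hδ
  have hsm : ∀ r ∈ Set.range α, ∀ r' ∈ Set.range α, r < r' → δ r < δ r' := by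
    rintro r ⟨v, rfl⟩ r' ⟨v', rfl⟩ hlt
    refine Submodule.finrank_lt_finrank_of_lt (lt_of_le_of_ne (sublevel_mono hlt.le) ?_)
    intro heq
    have h1 : v' ∈ sublevel α hultra hscal h0 (α v') := by
      rw [mem_sublevel]; exact le_max_left _ _
    rw [← heq, mem_sublevel, max_eq_left (hnn v)] at h1
    exact absurd h1 (not_le.2 hlt)
  have hinj : Set.InjOn δ (Set.range α) := by
    intro r hr r' hr' heq
    by_contra hne
    rcases lt_or_gt_of_ne hne with h | h
    · exact absurd heq (hsm r hr r' hr' h).ne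
    · exact absurd heq.symm (hsm r' hr' r hr h).ne
  have himg : (δ '' Set.range α).Finite :=
    (Set.finite_Iic (finrank ℂ V)).subset (by
      rintro _ ⟨r, _, rfl⟩; exact Submodule.finrank_le _)
  exact (Set.Finite.of_finite_image himg hinj)

/-- Core: existence of an adapted basis. -/
lemma core_basis : ∀ (N : ℕ) (V : Type u) [AddCommGroup V] [Module ℂ V]
    [FiniteDimensional ℂ V], finrank ℂ V = N → ∀ (α : V → ℝ), (∀ v, 0 ≤ α v) →
    (∀ v v', α (v + v') ≤ max (α v) (α v')) →
    (∀ (τ : ℂ), τ ≠ 0 → ∀ v, α (τ • v) = α v) →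
    (∀ v, α v = 0 ↔ v = 0) →
    ∃ e : Basis (Fin N) ℂ V, ∀ (v : V) (i : Fin N), e.repr v i ≠ 0 → α (e i) ≤ α v := by
  intro N
  induction N using Nat.strong_induction_on with
  | _ N ih =>
    intro V _ _ _ hdim α hnn hultra hscal hdef
    have h0 : α 0 = 0 := (hdef 0).2 rfl
    rcases Nat.eq_zero_or_pos N with rfl | hNpos
    · exact ⟨(Module.finBasis ℂ V).reindex (finCongr hdim), fun v i _ => i.elim0⟩
    -- the maximum value s of α
    have hSfin : (Set.range α).Finite := values_finite α hnn hultra hscal h0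
    have hSne : (Set.range α).Nonempty := ⟨α 0, 0, rfl⟩
    obtain ⟨s, hsmem, hsmax⟩ := hSfin.exists_maximalFor id _ hSne
    have hs_ub : ∀ v, α v ≤ s := by
      intro v
      rcases le_or_gt (α v) s with h | h
      · exact h
      · have := hsmax (j := α v) ⟨v, rfl⟩ h.le
        simp only [id] at this
        exact absurd this (not_le.2 h)
    obtain ⟨v₀, hv₀⟩ := hsmem
    -- s > 0 since V is nontrivial
    have : Nontrivial V := Module.nontrivial_of_finrank_pos (R := ℂ) (hdim ▸ hNpos)
    obtain ⟨w₀, hw₀⟩ := exists_ne (0 : V)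
    have hspos : 0 < s :=
      lt_of_lt_of_le (lt_of_le_of_ne (hnn w₀) (fun h => hw₀ ((hdef w₀).1 h.symm))) (hs_ub w₀)
    -- the strict sublevel submodule W
    set W : Submodule ℂ V :=
      { carrier := {v | α v < s}
        add_mem' := fun ha hb => lt_of_le_of_lt (hultra _ _) (max_lt ha hb)
        zero_mem' := by simpa [h0] using hspos
        smul_mem' := by
          intro c x hx
          rcases eq_or_ne c 0 with rfl | hc
          · simpa [h0] using hspos
          · simpa [hscal c hc] using hx } with hW
    have hmemW : ∀ v : V, v ∈ W ↔ α v < s := fun v => Iff.rfl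
    have hWne : W ≠ ⊤ := by
      intro h
      have : v₀ ∈ W := h ▸ Submodule.mem_top
      rw [hmemW, hv₀] at this
      exact lt_irrefl s this
    have hWlt : finrank ℂ W < N := hdim ▸ Submodule.finrank_lt hWne
    -- apply IH to W
    obtain ⟨f, hf⟩ := ih (finrank ℂ W) hWlt W rfl (fun w => α w)
      (fun w => hnn w) (fun w w' => hultra w w') (fun τ hτ w => hscal τ hτ w)
      (fun w => by rw [hdef]; exact ⟨fun h => Subtype.ext h, fun h => h ▸ rfl⟩)
    -- complement
    obtain ⟨W', hcompl⟩ := Submodule.exists_isCompl W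
    set g : Basis (Fin (finrank ℂ W')) ℂ W' := Module.finBasis ℂ W' with hg
    have hmk : finrank ℂ W + finrank ℂ W' = N := hdim ▸ Submodule.finrank_add_eq_of_isCompl hcompl
    set B : Basis (Fin (finrank ℂ W) ⊕ Fin (finrank ℂ W')) ℂ V :=
      (f.prod g).map (Submodule.prodEquivOfIsCompl W W' hcompl) with hB
    have hBrepr : ∀ v, B.repr v = (f.prod g).repr ((Submodule.prodEquivOfIsCompl W W' hcompl).symm v) :=
      fun v => rfl
    -- key property for B
    have hBkey : ∀ (v : V) (i), B.repr v i ≠ 0 → α (B i) ≤ α v := by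
      intro v i hi
      have hBle : ∀ j, α (B j) ≤ s := fun j => hs_ub _
      by_cases hvW : v ∈ W
      · -- v ∈ W : the symm decomposition is (⟨v⟩, 0)
        have hsymm : (Submodule.prodEquivOfIsCompl W W' hcompl).symm v = (⟨v, hvW⟩, 0) := by
          have := Submodule.prodEquivOfIsCompl_symm_apply_left (R := ℂ) (E := V) (p := W) (q := W') hcompl ⟨v, hvW⟩
          simpa using this
        cases i with
        | inl j =>
          have hrepr : B.repr v (Sum.inl j) = f.repr ⟨v, hvW⟩ j := by
            rw [hBrepr, hsymm, Basis.prod_repr_inl]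
          have hBj : B (Sum.inl j) = (f j : V) := by
            simp [hB, Basis.prod_apply, Submodule.coe_prodEquivOfIsCompl']
          rw [hBj]
          exact hf ⟨v, hvW⟩ j (hrepr ▸ hi)
        | inr j =>
          exfalso
          apply hi
          rw [hBrepr, hsymm, Basis.prod_repr_inr]
          simp
      · -- v ∉ W : α v = s
        have hvs : α v = s := le_antisymm (hs_ub v) (not_lt.1 (fun h => hvW h))
        rw [hvs]; exact hBle i
    -- reindex
    refine ⟨B.reindex ((finSumFinEquiv).trans (finCongr hmk)), ?_⟩
    intro v i hi
    rw [Basis.repr_reindex_apply] at hi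
    rw [Basis.reindex_apply]
    exact hBkey v _ hi

end aux

/-- Every non-Archimedean norm on a finite-dimensional complex vector space
(with respect to the trivial absolute value on `ℂ`) is diagonalizable in a
suitable basis. -/
theorem nonarchimedean_norm_diagonalizable
    {V : Type*} [AddCommGroup V] [Module ℂ V] [FiniteDimensional ℂ V]
    (N : ℕ) (hdim : Module.finrank ℂ V = N)
    (α : V → ℝ) (hnn : ∀ v, 0 ≤ α v)
    (hultra : ∀ v v', α (v + v') ≤ max (α v) (α v'))
    (hscal : ∀ (τ : ℂ), τ ≠ 0 → ∀ v, α (τ • v) = α v)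
    (hdef : ∀ v, α v = 0 ↔ v = 0) :
    ∃ (e : Basis (Fin N) ℂ V) (lam : Fin N → ℝ),
      ∀ v : V, v ≠ 0 →
        α v = sSup {r : ℝ | ∃ i : Fin N, e.repr v i ≠ 0 ∧ r = Real.exp (-lam i)} := by
  obtain ⟨e, he⟩ := core_basis N V hdim α hnn hultra hscal hdef
  have h0 : α 0 = 0 := (hdef 0).2 rfl
  have hpos : ∀ i, 0 < α (e i) := fun i =>
    lt_of_le_of_ne (hnn _) (fun h => Basis.ne_zero e i ((hdef (e i)).1 h.symm))
  refine ⟨e, fun i => -Real.log (α (e i)), ?_⟩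
  intro v hv
  have hexp : ∀ i : Fin N, Real.exp (-(fun i => -Real.log (α (e i))) i) = α (e i) := by
    intro i
    simp [Real.exp_log (hpos i)]
  set S : Set ℝ := {r : ℝ | ∃ i : Fin N, e.repr v i ≠ 0 ∧ r = Real.exp (-(fun i => -Real.log (α (e i))) i)} with hS
  have hSeq : S = (fun i => α (e i)) '' {i | e.repr v i ≠ 0} := by
    ext r
    constructor
    · rintro ⟨i, hi, rfl⟩; exact ⟨i, hi, (hexp i).symm⟩
    · rintro ⟨i, hi, rfl⟩; exact ⟨i, hi, (hexp i).symm⟩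
  have hSfin : S.Finite := hSeq ▸ Set.Finite.image _ (Set.toFinite _)
  have hbdd : BddAbove S := hSfin.bddAbove
  obtain ⟨i₀, hi₀⟩ : ∃ i, e.repr v i ≠ 0 := by
    by_contra h
    push_neg at h
    exact hv (e.repr.map_eq_zero_iff.1 (Finsupp.ext h))
  have hSne : S.Nonempty := ⟨α (e i₀), hSeq ▸ ⟨i₀, hi₀, rfl⟩⟩
  have hmemS : ∀ i, e.repr v i ≠ 0 → α (e i) ∈ S := fun i hi => hSeq ▸ ⟨i, hi, rfl⟩
  have hcle : 0 ≤ sSup S := le_trans (hnn (e i₀)) (le_csSup hbdd (hmemS i₀ hi₀))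
  refine le_antisymm ?_ ?_
  · -- α v ≤ sSup S
    have hvsum : v = ∑ i, e.repr v i • e i := (Basis.sum_repr e v).symm
    rw [hvsum]
    refine ultra_sum_le α h0 hultra Finset.univ _ _ hcle ?_
    intro i _
    rcases eq_or_ne (e.repr v i) 0 with h | h
    · simp [h, h0, hcle]
    · rw [hscal _ h]
      exact le_csSup hbdd (hmemS i h)
  · -- sSup S ≤ α v
    refine csSup_le hSne ?_
    rintro r ⟨i, hi, rfl⟩
    rw [hexp i]
    exact he v i hi
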